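/- For every λ ∈ ℤ^N and every 1 ≤ t ≤ N: t is good for λ (with respect to the parity sequence p̄) if and only if w₀(t) is cogood for s̃(λ) (with respect to the opposite parity sequence p̄′). -/
import Mathlib


namespace Kujawa

open Finset

variable {n : ℕ}

/-- The sign `(−1)^{p̄ i}` attached to the parity sequence `pb`. -/
def sg (pb : Fin (n + 1) → ZMod 2) (i : Fin (n + 1)) : ℤ :=
  if pb i = 0 then 1 else -1

/-- `ϑ_j = ∑_{i > j} (−1)^{p̄_i + p̄_j}`. -/
def theta (pb : Fin (n + 1) → ZMod 2) (j : Fin (n + 1)) : ℤ :=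
  ∑ i ∈ Finset.Ioi j, sg pb i * sg pb j

/-- The standard basis vector `ε_i` of `X(T) = ℤ^N`. -/
def eps (i : Fin (n + 1)) : Fin (n + 1) → ℤ := fun j => if j = i then 1 else 0

/-- The `j`-th residue `r_j(λ) = (λ + ϑ, ε_j)`. -/
def res (pb : Fin (n + 1) → ZMod 2) (l : Fin (n + 1) → ℤ) (j : Fin (n + 1)) : ℤ :=
  sg pb j * (l j + theta pb j)

/-- `ρ = ϑ + ∑_{i : p̄_i = 0} ε_i`, coordinatewise. -/
def rho (pb : Fin (n + 1) → ZMod 2) (k : Fin (n + 1)) : ℤ :=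
  theta pb k + (if pb k = 0 then 1 else 0)

/-- `l(λ) = ∑ λ_i`. -/
def ell (l : Fin (n + 1) → ℤ) : ℤ := ∑ i, l i

/-- The central character value `Z_r(λ)`. -/
def Zint (pb : Fin (n + 1) → ZMod 2) (r : ℕ) (l : Fin (n + 1) → ℤ) : ℤ :=
  ∑ s ∈ Finset.Icc 1 r, (-1 : ℤ) ^ (s - 1) *
    ∑ K ∈ Finset.powersetCard s (Finset.univ : Finset (Fin (n + 1))),
      ∑ a ∈ Fintype.piFinset (fun _ : Fin (n + 1) => Finset.range (r + 2)),
        if (∑ k ∈ K, a k) = r - s + 1 ∧ (∀ k, k ∉ K → a k = 0) then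
          (∏ k ∈ K, sg pb k) * ∏ k ∈ K, res pb l k ^ a k
        else 0

/-- `A_r(λ) = #{i : r_i(λ+ε_i) ≡ r (mod p)}`. -/
def Acount (pb : Fin (n + 1) → ZMod 2) (p : ℕ) (r : ZMod p) (l : Fin (n + 1) → ℤ) : ℕ :=
  (Finset.univ.filter fun i : Fin (n + 1) => ((res pb (l + eps i) i : ℤ) : ZMod p) = r).card

/-- `B_r(λ) = #{i : r_i(λ) ≡ r (mod p)}`. -/
def Bcount (pb : Fin (n + 1) → ZMod 2) (p : ℕ) (r : ZMod p) (l : Fin (n + 1) → ℤ) : ℕ :=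
  (Finset.univ.filter fun i : Fin (n + 1) => ((res pb l i : ℤ) : ZMod p) = r).card

/-- For `p = 0`: `γ_a` is the basis element `single a 1` of the free module `ℤ →₀ ℤ`. -/
noncomputable def gamma0 (a : ℤ) : ℤ →₀ ℤ := Finsupp.single a 1

/-- `wt` for `p = 0`, with values in the free `ℤ`-module on basis `{γ_a : a ∈ ℤ}`. -/
noncomputable def wt0 (pb : Fin (n + 1) → ZMod 2) (l : Fin (n + 1) → ℤ) : ℤ →₀ ℤ :=
  ∑ i : Fin (n + 1), sg pb i • gamma0 (sg pb i * (l i + rho pb i))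

/-- `Λ_r ∈ P = ℤδ ⊕ ⊕_{r ∈ ℤ/pℤ} ℤΛ_r`. -/
def LamP (p : ℕ) (r : ZMod p) : ℤ × (ZMod p → ℤ) := (0, fun s => if s = r then 1 else 0)

/-- `δ ∈ P`. -/
def delP (p : ℕ) : ℤ × (ZMod p → ℤ) := (1, 0)

/-- `γ_a = Λ_{s mod p} − Λ_{(s−1) mod p} − d·δ`, where `a = p·d + s` with `1 ≤ s ≤ p`. -/
def gammaP (p : ℕ) (a : ℤ) : ℤ × (ZMod p → ℤ) :=
  LamP p (((a - 1) % (p : ℤ) + 1 : ℤ) : ZMod p) - LamP p (((a - 1) % (p : ℤ) : ℤ) : ZMod p) -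
    ((a - 1) / (p : ℤ)) • delP p

/-- `wt` for prime `p`. -/
def wtP (p : ℕ) (pb : Fin (n + 1) → ZMod 2) (l : Fin (n + 1) → ℤ) : ℤ × (ZMod p → ℤ) :=
  ∑ i : Fin (n + 1), sg pb i • gammaP p (sg pb i * (l i + rho pb i))

/-- Entry `i` of the `r`-signature of `λ`: `1` codes `+`, `-1` codes `−`, `0` codes `0`. -/
def sig (pb : Fin (n + 1) → ZMod 2) (p : ℕ) (r : ZMod p) (l : Fin (n + 1) → ℤ)
    (i : Fin (n + 1)) : ℤ :=
  if ((res pb (l + eps i) i : ℤ) : ZMod p) = r then 1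
  else if ((res pb l i : ℤ) : ZMod p) = r then -1
  else 0

/-- Number of `−`'s of the `r`-signature of `λ` in positions `[i..j]`. -/
noncomputable def nM (pb : Fin (n + 1) → ZMod 2) (p : ℕ) (r : ZMod p) (l : Fin (n + 1) → ℤ)
    (i j : Fin (n + 1)) : ℕ :=
  Set.ncard {k : Fin (n + 1) | k ∈ Finset.Icc i j ∧ sig pb p r l k = -1}

/-- Number of `+`'s of the `r`-signature of `λ` in positions `[i..j]`. -/
noncomputable def nP (pb : Fin (n + 1) → ZMod 2) (p : ℕ) (r : ZMod p) (l : Fin (n + 1) → ℤ)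
    (i j : Fin (n + 1)) : ℕ :=
  Set.ncard {k : Fin (n + 1) | k ∈ Finset.Icc i j ∧ sig pb p r l k = 1}

/-- `i` is the position of a `−` in the reduced `r`-signature of `λ` (i.e. `i` is
`r`-normal for `λ`): the `−` at `i` is never cancelled, which happens exactly when every
interval `[i..j]` contains strictly more `−`'s than `+`'s. -/
def RMinus (pb : Fin (n + 1) → ZMod 2) (p : ℕ) (r : ZMod p) (l : Fin (n + 1) → ℤ)
    (i : Fin (n + 1)) : Prop :=
  sig pb p r l i = -1 ∧ ∀ j : Fin (n + 1), i ≤ j → nP pb p r l i j < nM pb p r l i j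

/-- `i` is the position of a `+` in the reduced `r`-signature of `λ` (i.e. `i` is
`r`-conormal for `λ`). -/
def RPlus (pb : Fin (n + 1) → ZMod 2) (p : ℕ) (r : ZMod p) (l : Fin (n + 1) → ℤ)
    (i : Fin (n + 1)) : Prop :=
  sig pb p r l i = 1 ∧ ∀ j : Fin (n + 1), j ≤ i → nM pb p r l j i < nP pb p r l j i

/-- `i` is the position of the leftmost `−` in the reduced `r`-signature (`r`-good). -/
def RGood (pb : Fin (n + 1) → ZMod 2) (p : ℕ) (r : ZMod p) (l : Fin (n + 1) → ℤ)
    (i : Fin (n + 1)) : Prop :=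
  RMinus pb p r l i ∧ ∀ j : Fin (n + 1), j < i → ¬ RMinus pb p r l j

/-- `i` is the position of the rightmost `+` in the reduced `r`-signature (`r`-cogood). -/
def RCogood (pb : Fin (n + 1) → ZMod 2) (p : ℕ) (r : ZMod p) (l : Fin (n + 1) → ℤ)
    (i : Fin (n + 1)) : Prop :=
  RPlus pb p r l i ∧ ∀ j : Fin (n + 1), i < j → ¬ RPlus pb p r l j

open Classical in
/-- The crystal operator `ẽ*_r`, with `none` playing the role of `0`. -/
noncomputable def eStar (pb : Fin (n + 1) → ZMod 2) (p : ℕ) (r : ZMod p)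
    (l : Fin (n + 1) → ℤ) : Option (Fin (n + 1) → ℤ) :=
  if h : (Finset.univ.filter (RMinus pb p r l)).Nonempty then
    some (l - eps ((Finset.univ.filter (RMinus pb p r l)).min' h))
  else none

open Classical in
/-- The crystal operator `f̃*_r`, with `none` playing the role of `0`. -/
noncomputable def fStar (pb : Fin (n + 1) → ZMod 2) (p : ℕ) (r : ZMod p)
    (l : Fin (n + 1) → ℤ) : Option (Fin (n + 1) → ℤ) :=
  if h : (Finset.univ.filter (RPlus pb p r l)).Nonempty then
    some (l + eps ((Finset.univ.filter (RPlus pb p r l)).max' h))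
  else none

/-- `A ↓ B`: there is an injection `θ : A → B` with `θ a ≤ a` for all `a ∈ A`. -/
def Down (A B : Finset (Fin (n + 1))) : Prop :=
  ∃ θ : Fin (n + 1) → Fin (n + 1), Set.InjOn θ ↑A ∧ ∀ a ∈ A, θ a ∈ B ∧ θ a ≤ a

/-- `C_{i,j}(λ) = {h ∈ (i..j) : c_{i,h}(λ) ≡ 0 (mod p)}`. -/
def Cset (pb : Fin (n + 1) → ZMod 2) (p : ℕ) (l : Fin (n + 1) → ℤ) (i j : Fin (n + 1)) :
    Finset (Fin (n + 1)) :=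
  (Finset.Ioo i j).filter fun h => ((res pb l i - res pb l h : ℤ) : ZMod p) = 0

/-- `B_{i,j}(λ) = {h ∈ [i..j) : b_{i,h}(λ) ≡ 0 (mod p)}`. -/
def Bset (pb : Fin (n + 1) → ZMod 2) (p : ℕ) (l : Fin (n + 1) → ℤ) (i j : Fin (n + 1)) :
    Finset (Fin (n + 1)) :=
  (Finset.Ico i j).filter fun h =>
    ((res pb l i - res pb (l + eps (h + 1)) (h + 1) : ℤ) : ZMod p) = 0

/-- The opposite parity sequence `p̄′_k = p̄_{w₀ k} + 1̄`, where `w₀ k = N + 1 − k`. -/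
def pbRev (pb : Fin (n + 1) → ZMod 2) : Fin (n + 1) → ZMod 2 := fun k => pb k.rev + 1

/-- `s̃ : ℤ^N → ℤ^N`, `(s̃ λ)_{w₀ i} = −λ_i`. -/
def stilde (l : Fin (n + 1) → ℤ) : Fin (n + 1) → ℤ := fun k => -l k.rev

/-- `(i, j)` is an `r`-canceling pair for `λ` (for `i < j`). -/
def CPair (pb : Fin (n + 1) → ZMod 2) (p : ℕ) (r : ZMod p) (l : Fin (n + 1) → ℤ)
    (i j : Fin (n + 1)) : Prop :=
  sig pb p r l i = -1 ∧ sig pb p r l j = 1 ∧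
    ∀ k : Fin (n + 1), i < k → k < j → sig pb p r l k = 0

/-- `(i i+1)·λ`: interchange coordinates `i` and `i+1`. -/
def swapL (i : Fin (n + 1)) (l : Fin (n + 1) → ℤ) : Fin (n + 1) → ℤ :=
  fun k => if k = i then l (i + 1) else if k = i + 1 then l i else l k

/-- The parity sequence obtained from `pb` by interchanging entries `i` and `i+1`. -/
def pbSwap (pb : Fin (n + 1) → ZMod 2) (i : Fin (n + 1)) : Fin (n + 1) → ZMod 2 :=
  fun k => if k = i then pb (i + 1) else if k = i + 1 then pb i else pb k

/-- The odd reflection `s_i` on `X(T)`. -/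
def sI (pb : Fin (n + 1) → ZMod 2) (p : ℕ) (i : Fin (n + 1)) (l : Fin (n + 1) → ℤ) :
    Fin (n + 1) → ℤ :=
  if ((sg pb i * l i - sg pb (i + 1) * l (i + 1) : ℤ) : ZMod p) = 0 then swapL i l
  else swapL i l + eps i - eps (i + 1)

/-! ### Auxiliary lemmas for Statement 11 -/

/-- `S = ∑ i (−1)^{p̄_i}`. -/
def Ssum (pb : Fin (n + 1) → ZMod 2) : ℤ := ∑ i, sg pb i

lemma sg_rev (pb : Fin (n + 1) → ZMod 2) (k : Fin (n + 1)) :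
    sg (pbRev pb) k = - sg pb k.rev := by
  have h : ∀ x : ZMod 2, x = 0 ∨ x = 1 := by decide
  rcases h (pb k.rev) with h' | h' <;> · simp [sg, pbRev, h']; try decide

lemma sg_sq (pb : Fin (n + 1) → ZMod 2) (j : Fin (n + 1)) : sg pb j * sg pb j = 1 := by
  unfold sg; split_ifs <;> norm_num

lemma res_add_eps (pb : Fin (n + 1) → ZMod 2) (l : Fin (n + 1) → ℤ) (i : Fin (n + 1)) :
    res pb (l + eps i) i = res pb l i + sg pb i := by
  simp [res, eps]; ring

lemma theta_rev (pb : Fin (n + 1) → ZMod 2) (k : Fin (n + 1)) :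
    theta (pbRev pb) k = ∑ i ∈ Finset.Iio k.rev, sg pb i * sg pb k.rev := by
  unfold theta
  refine Finset.sum_nbij' Fin.rev Fin.rev ?_ ?_ ?_ ?_ ?_
  · intro a ha
    simp only [Finset.mem_Ioi] at ha
    simp [Finset.mem_Iio, ha]
  · intro a ha
    simp only [Finset.mem_Iio] at ha
    simp only [Finset.mem_Ioi]
    rwa [← Fin.rev_lt_rev, Fin.rev_rev] at ha
  · intro a _; exact Fin.rev_rev a
  · intro a _; exact Fin.rev_rev a
  · intro a _
    rw [sg_rev, sg_rev]
    ring

lemma theta_split (pb : Fin (n + 1) → ZMod 2) (j : Fin (n + 1)) :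
    (∑ i ∈ Finset.Iio j, sg pb i * sg pb j) + theta pb j
      = (Ssum pb - sg pb j) * sg pb j := by
  unfold theta Ssum
  have huniv : (Finset.univ : Finset (Fin (n + 1)))
      = insert j (Finset.Iio j ∪ Finset.Ioi j) := by
    ext x
    simp only [Finset.mem_univ, Finset.mem_insert, Finset.mem_union, Finset.mem_Iio,
      Finset.mem_Ioi, true_iff]
    rcases lt_trichotomy x j with h | h | h
    · exact Or.inr (Or.inl h)
    · exact Or.inl h
    · exact Or.inr (Or.inr h)
  have hdisj : Disjoint (Finset.Iio j) (Finset.Ioi j) := by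
    rw [Finset.disjoint_left]
    intro a ha hb
    simp only [Finset.mem_Iio] at ha
    simp only [Finset.mem_Ioi] at hb
    exact absurd (ha.trans hb) (lt_irrefl a)
  have hj : j ∉ Finset.Iio j ∪ Finset.Ioi j := by
    simp [Finset.mem_Iio, Finset.mem_Ioi]
  have hsum : ∑ i, sg pb i * sg pb j
      = sg pb j * sg pb j + ((∑ i ∈ Finset.Iio j, sg pb i * sg pb j)
        + ∑ i ∈ Finset.Ioi j, sg pb i * sg pb j) := by
    rw [huniv, Finset.sum_insert hj, Finset.sum_union hdisj]
  have hmul : (∑ i, sg pb i) * sg pb j = ∑ i, sg pb i * sg pb j := Finset.sum_mul _ _ _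
  linear_combination -hsum - hmul

lemma res_rev (pb : Fin (n + 1) → ZMod 2) (lam : Fin (n + 1) → ℤ) (k : Fin (n + 1)) :
    res (pbRev pb) (stilde lam) k = res pb (lam + eps k.rev) k.rev - Ssum pb := by
  have h1 := theta_split pb k.rev
  have h2 := sg_sq pb k.rev
  rw [res_add_eps]
  unfold res stilde
  rw [sg_rev, theta_rev]
  set L := ∑ i ∈ Finset.Iio k.rev, sg pb i * sg pb k.rev with hL
  set T := theta pb k.rev
  set s := sg pb k.rev
  set S := Ssum pb
  linear_combination (-s) * h1 + (s - S) * h2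

lemma res_rev' (pb : Fin (n + 1) → ZMod 2) (lam : Fin (n + 1) → ℤ) (k : Fin (n + 1)) :
    res (pbRev pb) (stilde lam + eps k) k = res pb lam k.rev - Ssum pb := by
  rw [res_add_eps, res_rev, sg_rev, res_add_eps]
  ring

lemma one_ne_zero_zmod (p : ℕ) (hp : p = 0 ∨ p.Prime) : (1 : ZMod p) ≠ 0 := by
  rcases hp with rfl | hp
  · exact one_ne_zero
  · haveI := Fact.mk hp
    exact one_ne_zero

lemma sg_ne_zero_zmod (p : ℕ) (hp : p = 0 ∨ p.Prime) (pb : Fin (n + 1) → ZMod 2)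
    (j : Fin (n + 1)) : ((sg pb j : ℤ) : ZMod p) ≠ 0 := by
  have h1 := one_ne_zero_zmod p hp
  unfold sg; split_ifs
  · simpa using h1
  · intro h
    apply h1
    have : ((-1 : ℤ) : ZMod p) = 0 := h
    rw [Int.cast_neg, Int.cast_one, neg_eq_zero] at this
    exact this

lemma sig_rev (p : ℕ) (hp : p = 0 ∨ p.Prime) (pb : Fin (n + 1) → ZMod 2)
    (lam : Fin (n + 1) → ℤ) (r : ZMod p) (k : Fin (n + 1)) :
    sig (pbRev pb) p r (stilde lam) k
      = - sig pb p (r + ((Ssum pb : ℤ) : ZMod p)) lam k.rev := by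
  unfold sig
  have hA : (((res (pbRev pb) (stilde lam + eps k) k : ℤ) : ZMod p) = r)
      ↔ ((res pb lam k.rev : ℤ) : ZMod p) = r + ((Ssum pb : ℤ) : ZMod p) := by
    rw [res_rev']
    push_cast
    constructor
    · intro h; linear_combination h
    · intro h; linear_combination h
  have hB : (((res (pbRev pb) (stilde lam) k : ℤ) : ZMod p) = r)
      ↔ ((res pb (lam + eps k.rev) k.rev : ℤ) : ZMod p) = r + ((Ssum pb : ℤ) : ZMod p) := by
    rw [res_rev]
    push_cast
    constructor
    · intro h; linear_combination h
    · intro h; linear_combination h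
  have hnot : ¬ ((((res pb (lam + eps k.rev) k.rev : ℤ) : ZMod p)
        = r + ((Ssum pb : ℤ) : ZMod p)) ∧
      (((res pb lam k.rev : ℤ) : ZMod p) = r + ((Ssum pb : ℤ) : ZMod p))) := by
    rintro ⟨h1, h2⟩
    apply sg_ne_zero_zmod p hp pb k.rev
    rw [res_add_eps] at h1
    push_cast at h1
    linear_combination h1 - h2
  simp only [hA, hB]
  by_cases h1 : ((res pb lam k.rev : ℤ) : ZMod p) = r + ((Ssum pb : ℤ) : ZMod p) <;>
    by_cases h2 : ((res pb (lam + eps k.rev) k.rev : ℤ) : ZMod p)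
      = r + ((Ssum pb : ℤ) : ZMod p)
  · exact absurd ⟨h2, h1⟩ hnot
  · simp [h1, h2]
  · simp [h1, h2]
  · simp [h1, h2]

lemma ncard_rev (P : Fin (n + 1) → Prop) :
    {k : Fin (n + 1) | P k.rev}.ncard = {k : Fin (n + 1) | P k}.ncard := by
  have himg : {k : Fin (n + 1) | P k} = Fin.rev '' {k : Fin (n + 1) | P k.rev} := by
    ext m
    simp only [Set.mem_setOf_eq, Set.mem_image]
    constructor
    · intro h; exact ⟨m.rev, by simpa using h, Fin.rev_rev m⟩
    · rintro ⟨k, hk, rfl⟩; exact hk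
  rw [himg, Set.ncard_image_of_injective _ Fin.rev_injective]

lemma nM_rev (p : ℕ) (hp : p = 0 ∨ p.Prime) (pb : Fin (n + 1) → ZMod 2)
    (lam : Fin (n + 1) → ℤ) (r : ZMod p) (i j : Fin (n + 1)) :
    nM (pbRev pb) p r (stilde lam) i j
      = nP pb p (r + ((Ssum pb : ℤ) : ZMod p)) lam j.rev i.rev := by
  unfold nM nP
  have hset : {k : Fin (n + 1) | k ∈ Finset.Icc i j ∧ sig (pbRev pb) p r (stilde lam) k = -1}
      = {k : Fin (n + 1) | k.rev ∈ Finset.Icc j.rev i.rev ∧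
          sig pb p (r + ((Ssum pb : ℤ) : ZMod p)) lam k.rev = 1} := by
    ext k
    simp only [Set.mem_setOf_eq, Finset.mem_Icc, Fin.rev_le_rev]
    rw [sig_rev p hp]
    constructor
    · rintro ⟨⟨h1, h2⟩, h3⟩; exact ⟨⟨h2, h1⟩, by omega⟩
    · rintro ⟨⟨h1, h2⟩, h3⟩; exact ⟨⟨h2, h1⟩, by omega⟩
  rw [hset]
  exact ncard_rev (fun m => m ∈ Finset.Icc j.rev i.rev ∧
    sig pb p (r + ((Ssum pb : ℤ) : ZMod p)) lam m = 1)

lemma nP_rev (p : ℕ) (hp : p = 0 ∨ p.Prime) (pb : Fin (n + 1) → ZMod 2)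
    (lam : Fin (n + 1) → ℤ) (r : ZMod p) (i j : Fin (n + 1)) :
    nP (pbRev pb) p r (stilde lam) i j
      = nM pb p (r + ((Ssum pb : ℤ) : ZMod p)) lam j.rev i.rev := by
  unfold nM nP
  have hset : {k : Fin (n + 1) | k ∈ Finset.Icc i j ∧ sig (pbRev pb) p r (stilde lam) k = 1}
      = {k : Fin (n + 1) | k.rev ∈ Finset.Icc j.rev i.rev ∧
          sig pb p (r + ((Ssum pb : ℤ) : ZMod p)) lam k.rev = -1} := by
    ext k
    simp only [Set.mem_setOf_eq, Finset.mem_Icc, Fin.rev_le_rev]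
    rw [sig_rev p hp]
    constructor
    · rintro ⟨⟨h1, h2⟩, h3⟩; exact ⟨⟨h2, h1⟩, by omega⟩
    · rintro ⟨⟨h1, h2⟩, h3⟩; exact ⟨⟨h2, h1⟩, by omega⟩
  rw [hset]
  exact ncard_rev (fun m => m ∈ Finset.Icc j.rev i.rev ∧
    sig pb p (r + ((Ssum pb : ℤ) : ZMod p)) lam m = -1)

lemma rplus_rev (p : ℕ) (hp : p = 0 ∨ p.Prime) (pb : Fin (n + 1) → ZMod 2)
    (lam : Fin (n + 1) → ℤ) (r : ZMod p) (k : Fin (n + 1)) :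
    RPlus (pbRev pb) p r (stilde lam) k
      ↔ RMinus pb p (r + ((Ssum pb : ℤ) : ZMod p)) lam k.rev := by
  unfold RPlus RMinus
  rw [sig_rev p hp]
  constructor
  · rintro ⟨h1, h2⟩
    refine ⟨by omega, fun j hj => ?_⟩
    have hj' : j.rev ≤ k := by
      have := Fin.rev_le_rev.mpr hj
      rwa [Fin.rev_rev] at this
    have := h2 j.rev hj'
    rwa [nM_rev p hp, nP_rev p hp, Fin.rev_rev] at this
  · rintro ⟨h1, h2⟩
    refine ⟨by omega, fun j hj => ?_⟩
    rw [nM_rev p hp, nP_rev p hp]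
    exact h2 j.rev (Fin.rev_le_rev.mpr hj)

lemma rcogood_rev (p : ℕ) (hp : p = 0 ∨ p.Prime) (pb : Fin (n + 1) → ZMod 2)
    (lam : Fin (n + 1) → ℤ) (r : ZMod p) (t : Fin (n + 1)) :
    RCogood (pbRev pb) p r (stilde lam) t.rev
      ↔ RGood pb p (r + ((Ssum pb : ℤ) : ZMod p)) lam t := by
  unfold RCogood RGood
  rw [rplus_rev p hp, Fin.rev_rev]
  constructor
  · rintro ⟨h1, h2⟩
    refine ⟨h1, fun j hj hmin => ?_⟩
    exact h2 j.rev (Fin.rev_lt_rev.mpr hj)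
      ((rplus_rev p hp pb lam r j.rev).mpr (by rwa [Fin.rev_rev]))
  · rintro ⟨h1, h2⟩
    refine ⟨h1, fun j hj hplus => ?_⟩
    have hj' : j.rev < t := by
      have := Fin.rev_lt_rev.mpr hj
      rwa [Fin.rev_rev] at this
    exact h2 j.rev hj' ((rplus_rev p hp pb lam r j).mp hplus)

/-- `t` is good for `λ` (w.r.t. `p̄`) iff `w₀ t` is cogood for `s̃ λ`
(w.r.t. the opposite parity sequence `p̄′`). -/
theorem statement11 (p : ℕ) (hp : p = 0 ∨ p.Prime) (pb : Fin (n + 1) → ZMod 2)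
    (lam : Fin (n + 1) → ℤ) (t : Fin (n + 1)) :
    (∃ r : ZMod p, RGood pb p r lam t) ↔
      (∃ r : ZMod p, RCogood (pbRev pb) p r (stilde lam) t.rev) := by
  constructor
  · rintro ⟨r, hr⟩
    refine ⟨r - ((Ssum pb : ℤ) : ZMod p), ?_⟩
    rw [rcogood_rev p hp]
    simpa using hr
  · rintro ⟨r, hr⟩
    exact ⟨r + ((Ssum pb : ℤ) : ZMod p), (rcogood_rev p hp pb lam r t).mp hr⟩

end Kujawa
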